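/- For the curvature-of-indicatrix tensor defined by R̂_i{}^j{}_{mn} = (1/K²)(A_h{}^j{}_m A_i{}^h{}_n - A_h{}^j{}_n A_i{}^h{}_m) with the Cartan tensor of the special algebraic form A_{ijk} = (1/N)(h_{ij}A_k + h_{ik}A_j + h_{jk}A_i - A_iA_jA_k/⟨A,A⟩) and h_{ij}A^j = A_i, h_i{}^k h_{kj} = h_{ij}, one obtains R̂_{ijmn} = -(⟨A,A⟩/N²)(h_{im}h_{jn} - h_{in}h_{jm})/K². -/
import Mathlib

open Finset

set_option maxHeartbeats 1600000 in
theorem indicatrix_curvature_special_form (N : ℕ) (hN : 0 < N)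
    (ginv : Matrix (Fin N) (Fin N) ℝ) (hginv : ginv.IsSymm)
    (h : Matrix (Fin N) (Fin N) ℝ) (hsymm : h.IsSymm)
    (hidem : ∀ i j, (∑ k, ∑ l, h i k * ginv k l * h l j) = h i j)
    (A Aup : Fin N → ℝ) (hAup : Aup = ginv.mulVec A)
    (hhA : ∀ i, (∑ j, h i j * Aup j) = A i)
    (c : ℝ) (hc : c = ∑ k, A k * Aup k) (hcne : c ≠ 0)
    (K : ℝ) (hK : 0 < K)
    (A3 : Fin N → Fin N → Fin N → ℝ)
    (hA3 : ∀ i j k, A3 i j k =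
      (1 / (N : ℝ)) * (h i j * A k + h i k * A j + h j k * A i - A i * A j * A k / c)) :
    ∀ i j m n,
      (1 / K ^ 2) * (∑ p, ∑ l, ginv p l * (A3 l j m * A3 i p n - A3 l j n * A3 i p m)) =
        -(c / (N : ℝ) ^ 2) * (h i m * h j n - h i n * h j m) / K ^ 2 := by
  intro i j m n
  have hNne : (N : ℝ) ≠ 0 := Nat.cast_ne_zero.mpr hN.ne'
  have hKne : K ≠ 0 := hK.ne'
  have hs : ∀ a b, h a b = h b a := fun a b => hsymm.apply b a
  have gs : ∀ a b, ginv a b = ginv b a := fun a b => hginv.apply b a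
  have hAup2 : ∀ p, Aup p = ∑ l, ginv p l * A l := by
    intro p; rw [hAup]; simp [Matrix.mulVec, dotProduct]
  -- contraction lemmas
  have cF : ∀ a b, (∑ p, ∑ l, ginv p l * h l a * h b p) = h b a := by
    intro a b
    calc (∑ p, ∑ l, ginv p l * h l a * h b p)
        = ∑ p, ∑ l, h b p * ginv p l * h l a :=
          Finset.sum_congr rfl fun p _ => Finset.sum_congr rfl fun l _ => by ring
      _ = h b a := hidem b a
  have cGa : ∀ a, (∑ p, ∑ l, ginv p l * h l a * A p) = A a := by
    intro a
    rw [Finset.sum_comm]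
    have e : ∀ l, (∑ p, ginv p l * h l a * A p) = h a l * Aup l := by
      intro l
      rw [hAup2 l, Finset.mul_sum]
      exact Finset.sum_congr rfl fun p _ => by rw [gs p l, hs l a]; ring
    rw [Finset.sum_congr rfl fun l _ => e l, hhA a]
  have cGb : ∀ b, (∑ p, ∑ l, ginv p l * A l * h b p) = A b := by
    intro b
    have e : ∀ p, (∑ l, ginv p l * A l * h b p) = h b p * Aup p := by
      intro p
      rw [hAup2 p, Finset.mul_sum]
      exact Finset.sum_congr rfl fun l _ => by ring
    rw [Finset.sum_congr rfl fun p _ => e p, hhA b]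
  have cH : (∑ p, ∑ l, ginv p l * A l * A p) = c := by
    have e : ∀ p, (∑ l, ginv p l * A l * A p) = A p * Aup p := by
      intro p
      rw [hAup2 p, Finset.mul_sum]
      exact Finset.sum_congr rfl fun l _ => by ring
    rw [Finset.sum_congr rfl fun p _ => e p, hc]
  -- closed form for the contracted product
  have key : ∀ J M I n',
      (∑ p, ∑ l, ginv p l * (A3 l J M * A3 I p n')) =
      (1 / (N : ℝ)^2) * (A M * A n' * h I J + A M * A I * h n' J
        + A J * A n' * h I M + A J * A I * h n' M
        + A M * (h I n' - A I * A n' / c) * A J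
        + A J * (h I n' - A I * A n' / c) * A M
        + (h J M - A J * A M / c) * A n' * A I
        + (h J M - A J * A M / c) * A I * A n'
        + (h J M - A J * A M / c) * (h I n' - A I * A n' / c) * c) := by
    intro J M I n'
    have e : ∀ p l, ginv p l * (A3 l J M * A3 I p n') =
        ((1 / (N : ℝ)^2) * (A M * A n')) * (ginv p l * h l J * h I p)
      + ((1 / (N : ℝ)^2) * (A M * A I)) * (ginv p l * h l J * h p n')
      + ((1 / (N : ℝ)^2) * (A J * A n')) * (ginv p l * h l M * h I p)
      + ((1 / (N : ℝ)^2) * (A J * A I)) * (ginv p l * h l M * h p n')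
      + ((1 / (N : ℝ)^2) * (A M * (h I n' - A I * A n' / c))) * (ginv p l * h l J * A p)
      + ((1 / (N : ℝ)^2) * (A J * (h I n' - A I * A n' / c))) * (ginv p l * h l M * A p)
      + ((1 / (N : ℝ)^2) * ((h J M - A J * A M / c) * A n')) * (ginv p l * A l * h I p)
      + ((1 / (N : ℝ)^2) * ((h J M - A J * A M / c) * A I)) * (ginv p l * A l * h p n')
      + ((1 / (N : ℝ)^2) * ((h J M - A J * A M / c) * (h I n' - A I * A n' / c))) * (ginv p l * A l * A p) := by
      intro p l
      rw [hA3, hA3]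
      field_simp
      ring
    rw [Finset.sum_congr rfl fun p _ => Finset.sum_congr rfl fun l _ => e p l]
    simp only [Finset.sum_add_distrib, ← Finset.mul_sum]
    have c2 : ∀ a b, (∑ p, ∑ l, ginv p l * h l a * h p b) = h b a := by
      intro a b
      rw [← cF a b]
      exact Finset.sum_congr rfl fun p _ => Finset.sum_congr rfl fun l _ => by rw [hs p b]
    rw [cF J I, c2 J n', cF M I, c2 M n', cGa J, cGa M, cGb I,
      show (∑ p, ∑ l, ginv p l * A l * h p n') = A n' from by
        rw [← cGb n']; exact Finset.sum_congr rfl fun p _ => Finset.sum_congr rfl fun l _ => by rw [hs p n'],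
      cH]
    ring
  have split : (∑ p, ∑ l, ginv p l * (A3 l j m * A3 i p n - A3 l j n * A3 i p m)) =
      (∑ p, ∑ l, ginv p l * (A3 l j m * A3 i p n)) - (∑ p, ∑ l, ginv p l * (A3 l j n * A3 i p m)) := by
    rw [← Finset.sum_sub_distrib]
    exact Finset.sum_congr rfl fun p _ => by
      rw [← Finset.sum_sub_distrib]
      exact Finset.sum_congr rfl fun l _ => by ring
  rw [split, key j m i n, key j n i m, hs i j, hs n j, hs i m, hs n m, hs i n, hs m n, hs m j]
  field_simp
  ring
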